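/- Let C be a field, Λ a free abelian group of finite rank, and λ₀ an element of some ℤ-basis of Λ. Then the element 1 − e^{λ₀} is irreducible in the group algebra C[Λ]. (This is the irreducibility lemma of Appendix A.3 of the paper, applied there with Λ = Z/Z⁰ and e^{λ₀} = τ_{a_α}, showing that 1 − τ_α ∈ H_Z(ψ_V) is irreducible.) -/

import Mathlib

open AddMonoidAlgebra

section Aux

variable {C : Type*} [Field C] {Λ : Type*} [AddCommGroup Λ]

/-- `1 - e^{l0}` divides `1 - e^{n • l0}` for all `n : ℤ`. -/
lemma one_sub_of'_dvd (l0 : Λ) (n : ℤ) :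
    (1 : AddMonoidAlgebra C Λ) - of' C Λ l0 ∣ 1 - of' C Λ (n • l0) := by
  have key : ∀ m : ℕ, (1 : AddMonoidAlgebra C Λ) - of' C Λ l0 ∣ 1 - of' C Λ ((m : ℤ) • l0) := by
    intro m
    have : of' C Λ ((m : ℤ) • l0) = (of' C Λ l0) ^ m := by
      rw [of'_apply, of'_apply, AddMonoidAlgebra.single_pow, one_pow, natCast_zsmul]
    rw [this]
    exact one_sub_dvd_one_sub_pow _ m
  rcases le_or_gt 0 n with hn | hn
  · obtain ⟨m, rfl⟩ := Int.eq_ofNat_of_zero_le hn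
    exact key m
  · obtain ⟨m, rfl⟩ : ∃ m : ℕ, n = -(m : ℤ) := ⟨n.natAbs, by omega⟩
    have h2 := key m
    have h3 : (1 : AddMonoidAlgebra C Λ) - of' C Λ ((-(m : ℤ)) • l0) =
        -(of' C Λ ((-(m : ℤ)) • l0) * (1 - of' C Λ ((m : ℤ) • l0))) := by
      rw [mul_sub, mul_one, of'_apply, of'_apply, AddMonoidAlgebra.single_mul_single, mul_one]
      rw [show -(m : ℤ) • l0 + (m : ℤ) • l0 = (0 : Λ) by simp [neg_smul]]
      rw [show AddMonoidAlgebra.single (0 : Λ) (1 : C) = 1 from rfl]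
      ring
    rw [h3]
    exact (Dvd.dvd.mul_left h2 _).neg_right

end Aux

/-- The irreducibility lemma of Appendix A.3 of the paper: if `Λ` is a free abelian group of
finite rank and `l0` is an element of some `ℤ`-basis of `Λ`, then `1 - e^{l0}` is irreducible
in the group algebra `C[Λ]` over a field `C`. -/
theorem one_sub_basis_elem_irreducible
    {C : Type*} [Field C] {Λ : Type*} [AddCommGroup Λ]
    {ι : Type*} [Fintype ι] (b : Module.Basis ι ℤ Λ) (i₀ : ι) :
    Irreducible ((1 : AddMonoidAlgebra C Λ) - AddMonoidAlgebra.of' C Λ (b i₀)) := by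
  classical
  haveI : UniqueSums Λ := (AddEquiv.uniqueSums_iff b.repr.toAddEquiv).mpr inferInstance
  haveI : IsDomain (AddMonoidAlgebra C Λ) := NoZeroDivisors.to_isDomain _
  set l0 := b i₀ with hl0
  -- the additive hom killing the `i₀`-coordinate
  set q : Λ →+ Λ :=
    { toFun := fun x => x - (b.coord i₀ x) • l0
      map_zero' := by simp
      map_add' := by intro x y; simp [add_smul]; abel } with hq
  have hql0 : q l0 = 0 := by
    simp [hq, hl0, Module.Basis.coord_apply, Module.Basis.repr_self]
  set φ : AddMonoidAlgebra C Λ →+* AddMonoidAlgebra C Λ :=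
    AddMonoidAlgebra.mapDomainRingHom C q with hφ
  have hφsingle : ∀ (a : Λ) (r : C),
      φ (AddMonoidAlgebra.single a r) = AddMonoidAlgebra.single (q a) r := by
    intro a r
    simp [hφ, Finsupp.mapDomain_single]
  set p : AddMonoidAlgebra C Λ := 1 - of' C Λ l0 with hp
  have hφp : φ p = 0 := by
    rw [hp, map_sub, map_one, of'_apply, hφsingle, hql0]
    rw [show AddMonoidAlgebra.single (0 : Λ) (1 : C) = 1 from rfl]
    ring
  -- key: p divides f - φ f for every f
  have key : ∀ f : AddMonoidAlgebra C Λ, p ∣ f - φ f := by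
    intro f
    induction f using AddMonoidAlgebra.induction with
    | zero => simp
    | single_add a r f _ _ ih =>
      let f' : AddMonoidAlgebra C Λ := f
      show p ∣ (AddMonoidAlgebra.single a r + f') - φ (AddMonoidAlgebra.single a r + f')
      replace ih : p ∣ f' - φ f' := ih
      have hd0 : p ∣ AddMonoidAlgebra.single a r - AddMonoidAlgebra.single (q a) r := ?_
      · rw [map_add, hφsingle]
        have hcomb := dvd_add hd0 ih
        convert hcomb using 1
        abel
      have hd : AddMonoidAlgebra.single a r - AddMonoidAlgebra.single (q a) r =
          AddMonoidAlgebra.single (q a) r * -(1 - of' C Λ ((b.coord i₀ a) • l0)) := by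
        rw [mul_neg, mul_sub, mul_one, of'_apply, AddMonoidAlgebra.single_mul_single, mul_one]
        have : q a + (b.coord i₀ a) • l0 = a := by simp [hq]
        rw [this]; ring
      rw [hd]
      exact Dvd.dvd.mul_left (one_sub_of'_dvd l0 _).neg_right _
  have hprime : Prime p := by
    refine ⟨?_, ?_, ?_⟩
    · -- p ≠ 0 : coefficient at 0 is 1
      intro h
      have h0 : p.coeff 0 = (1 : C) := by
        rw [hp, AddMonoidAlgebra.one_def, of'_apply]
        rw [AddMonoidAlgebra.coeff_sub, AddMonoidAlgebra.coeff_single, AddMonoidAlgebra.coeff_single, Finsupp.sub_apply, Finsupp.single_apply, Finsupp.single_apply]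
        have : l0 ≠ 0 := b.ne_zero i₀
        simp [this, Ne.symm this]
      rw [h] at h0
      simp at h0
    · -- not a unit
      intro hu
      have := hu.map φ
      rw [hφp] at this
      exact not_isUnit_zero this
    · intro x y hxy
      obtain ⟨c, hc⟩ := hxy
      have hφxy : φ x * φ y = 0 := by
        rw [← map_mul, hc, map_mul, hφp, zero_mul]
      rcases mul_eq_zero.mp hφxy with h | h
      · left; have := key x; rwa [h, sub_zero] at this
      · right; have := key y; rwa [h, sub_zero] at this
  exact hprime.irreducible
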